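/- φ is antitone for the pointwise order: if w, η ∈ {0,1}^{ℕ₊} satisfy w_i ≥ η_i for all i ≥ 1, then φ(w) ≤ φ(η). Consequently, for any constants p₁ ≥ 0 and c ≥ 0, the kernel p(1|w) := p₁(1 − c·φ(w)) is monotone nondecreasing in w for the pointwise order. -/

import Mathlib

open scoped ENNReal

/-- `T(w) = inf{k ≥ 1 : (1/k)·Σ_{i=1}^k w_i ≥ σ}` (value `⊤` if no such `k`); the sequence
`w` is indexed so that `w n` is the letter `w_{n+1}` of the paper. -/
noncomputable def hittingTime (σ : ℝ) (w : ℕ → Bool) : ℕ∞ :=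
  sInf ((fun k : ℕ => (k : ℕ∞)) ''
    {k : ℕ | 1 ≤ k ∧ σ * (k : ℝ) ≤ ∑ i ∈ Finset.range k, (if w i then (1 : ℝ) else 0)})

/-- `φ(w) = Σ_{i=1}^∞ ( β(i)·1{w_i = 0, T(w) > i} + γ(i)·1{w_i = 0, T(w) ≤ i} )`;
here `β n`, `γ n` stand for the paper's `β(n+1)`, `γ(n+1)`. -/
noncomputable def phiKernel (σ : ℝ) (β γ : ℕ → ℝ) (w : ℕ → Bool) : ℝ :=
  ∑' n : ℕ,
    ((if w n = false ∧ ((n : ℕ∞) + 1) < hittingTime σ w then β n else 0) +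
     (if w n = false ∧ hittingTime σ w ≤ (n : ℕ∞) + 1 then γ n else 0))

/-- Monotonicity claim of Example "pezzoforte": `φ` is antitone for the pointwise order on
`{0,1}^{ℕ₊}`, and consequently the kernel `p(1|w) = p₁(1 − c·φ(w))` is monotone
nondecreasing in `w`. -/
theorem stmt13 (σ : ℝ) (hσ : 0 < σ) (β γ : ℕ → ℝ)
    (hβγ : ∀ i, γ i ≤ β i) (hγ : ∀ i, 0 ≤ γ i) (hβ : Summable β) :
    (∀ w η : ℕ → Bool, (∀ i, η i ≤ w i) →
      phiKernel σ β γ w ≤ phiKernel σ β γ η) ∧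
    (∀ p₁ c : ℝ, 0 ≤ p₁ → 0 ≤ c → ∀ w η : ℕ → Bool, (∀ i, η i ≤ w i) →
      p₁ * (1 - c * phiKernel σ β γ η) ≤ p₁ * (1 - c * phiKernel σ β γ w)) := by
  have hβ0 : ∀ i, 0 ≤ β i := fun i => (hγ i).trans (hβγ i)
  set f : (ℕ → Bool) → ℕ → ℝ := fun v n =>
    (if v n = false ∧ ((n : ℕ∞) + 1) < hittingTime σ v then β n else 0) +
    (if v n = false ∧ hittingTime σ v ≤ (n : ℕ∞) + 1 then γ n else 0) with hf
  have hf0 : ∀ v n, 0 ≤ f v n := by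
    intro v n
    apply add_nonneg <;> split <;> first | exact hβ0 n | exact hγ n | exact le_rfl
  have hfb : ∀ v n, f v n ≤ β n := by
    intro v n
    simp only [hf]
    by_cases h1 : v n = false ∧ ((n : ℕ∞) + 1) < hittingTime σ v
    · rw [if_pos h1, if_neg (fun h2 => absurd h2.2 (not_le.mpr h1.2))]
      simp
    · rw [if_neg h1]
      split
      · simpa using hβγ n
      · simpa using hβ0 n
  have hsum : ∀ v, Summable (f v) := fun v =>
    Summable.of_nonneg_of_le (hf0 v) (hfb v) hβ
  have main : ∀ w η : ℕ → Bool, (∀ i, η i ≤ w i) →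
      phiKernel σ β γ w ≤ phiKernel σ β γ η := by
    intro w η hle
    have hwtrue : ∀ i, η i = true → w i = true := by
      intro i hi
      have h := hle i
      rw [hi] at h
      cases hwi : w i
      · rw [hwi] at h; exact absurd h (by decide)
      · rfl
    have hT : hittingTime σ w ≤ hittingTime σ η := by
      apply sInf_le_sInf
      rintro x ⟨k, ⟨hk1, hk2⟩, rfl⟩
      refine ⟨k, ⟨hk1, hk2.trans (Finset.sum_le_sum fun i _ => ?_)⟩, rfl⟩
      cases hei : η i
      · cases hwi : w i <;> simp
      · rw [hwtrue i hei]
    have key : ∀ n, f w n ≤ f η n := by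
      intro n
      by_cases hw : w n = false
      · have he : η n = false := by
          cases hen : η n
          · rfl
          · rw [hwtrue n hen] at hw; exact absurd hw (by decide)
        by_cases hlt : ((n : ℕ∞) + 1) < hittingTime σ w
        · have hlt' : ((n : ℕ∞) + 1) < hittingTime σ η := lt_of_lt_of_le hlt hT
          have e1 : f w n = β n := by simp [hf, hw, hlt, not_le.mpr hlt]
          have e2 : f η n = β n := by simp [hf, he, hlt', not_le.mpr hlt']
          rw [e1, e2]
        · have hle1 : hittingTime σ w ≤ (n : ℕ∞) + 1 := not_lt.mp hlt
          have e1 : f w n = γ n := by simp [hf, hw, hlt, hle1]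
          rw [e1]
          by_cases hlt' : ((n : ℕ∞) + 1) < hittingTime σ η
          · have e2 : f η n = β n := by simp [hf, he, hlt', not_le.mpr hlt']
            rw [e2]; exact hβγ n
          · have e2 : f η n = γ n := by simp [hf, he, hlt', not_lt.mp hlt']
            rw [e2]
      · have e1 : f w n = 0 := by simp [hf, hw]
        rw [e1]; exact hf0 η n
    exact Summable.tsum_le_tsum key (hsum w) (hsum η)
  refine ⟨main, fun p₁ c hp hc w η hle => ?_⟩
  have := main w η hle
  have h1 : c * phiKernel σ β γ w ≤ c * phiKernel σ β γ η :=
    mul_le_mul_of_nonneg_left this hc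
  have h2 : 1 - c * phiKernel σ β γ η ≤ 1 - c * phiKernel σ β γ w := by linarith
  exact mul_le_mul_of_nonneg_left h2 hp
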